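/- For the observability matrix $H = (C; CA; \dots; CA^{2N-1})$ with $A = \mathrm{diag}(A_1,\dots,A_N)$, $A_j = \begin{pmatrix}0&1\\-\lambda_j&0\end{pmatrix}$, and $C$ with rows $(c_{s1},0,\dots,c_{sN},0)$, there exist permutations of rows and columns transforming $H$ into the block form $\begin{pmatrix} H' & 0 \\ 0 & H' \end{pmatrix}$ where $H'$ is the $(r+1)N \times N$ matrix stacking the blocks $H_s$, $(H_s)_{n,j} = (-\lambda_j)^{n-1}c_{sj}$; in particular $\mathrm{rank}\,H = 2\,\mathrm{rank}\,H'$. -/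
import Mathlib

def blockA (N : ℕ) (lam : Fin N → ℝ) : Matrix (Fin N × Fin 2) (Fin N × Fin 2) ℝ :=
  Matrix.of fun p q =>
    if p.1 = q.1 then
      if p.2 = 0 ∧ q.2 = 1 then 1
      else if p.2 = 1 ∧ q.2 = 0 then -lam p.1
      else 0
    else 0

def outC (N r : ℕ) (c : Fin (r + 1) → Fin N → ℝ) : Matrix (Fin (r + 1)) (Fin N × Fin 2) ℝ :=
  Matrix.of fun s q => if q.2 = 0 then c s q.1 else 0

def obsMat (N r : ℕ) (lam : Fin N → ℝ) (c : Fin (r + 1) → Fin N → ℝ) :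
    Matrix (Fin (2 * N) × Fin (r + 1)) (Fin N × Fin 2) ℝ :=
  Matrix.of fun ns q => (outC N r c * (blockA N lam) ^ (ns.1 : ℕ)) ns.2 q

def stackedH (N r : ℕ) (lam : Fin N → ℝ) (c : Fin (r + 1) → Fin N → ℝ) :
    Matrix (Fin (r + 1) × Fin N) (Fin N) ℝ :=
  Matrix.of fun sn j => (-lam j) ^ (sn.2 : ℕ) * c sn.1 j

lemma blockA_sq (N : ℕ) (lam : Fin N → ℝ) :
    blockA N lam ^ 2 = Matrix.diagonal (fun p => -lam p.1) := by
  ext ⟨j, a⟩ ⟨k, b⟩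
  rw [pow_two, Matrix.mul_apply, Fintype.sum_prod_type]
  simp only [blockA, Matrix.of_apply, Fin.sum_univ_two]
  by_cases h : j = k
  · subst h
    fin_cases a <;> fin_cases b <;>
      simp [Matrix.diagonal_apply, Finset.sum_ite_eq', Prod.ext_iff]
  · have : Matrix.diagonal (fun p : Fin N × Fin 2 => -lam p.1) (j,a) (k,b) = 0 := by
      simp [Matrix.diagonal_apply, Prod.ext_iff, h]
    rw [this]
    refine Finset.sum_eq_zero fun x _ => ?_
    rcases eq_or_ne x k with rfl | hx
    · simp [h]
    · simp [hx]

lemma blockA_pow_even (N : ℕ) (lam : Fin N → ℝ) (m : ℕ) :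
    blockA N lam ^ (2 * m) = Matrix.diagonal (fun p => (-lam p.1) ^ m) := by
  induction m with
  | zero => rw [Nat.mul_zero, pow_zero]; ext p q; simp [Matrix.one_apply, Matrix.diagonal_apply]
  | succ m ih =>
      rw [Nat.mul_succ, pow_add, ih, blockA_sq, Matrix.diagonal_mul_diagonal]
      congr 1

lemma obsMat_apply (N r : ℕ) (lam : Fin N → ℝ) (c : Fin (r + 1) → Fin N → ℝ)
    (n : Fin (2 * N)) (s : Fin (r + 1)) (j : Fin N) (b : Fin 2) :
    obsMat N r lam c (n, s) (j, b) =
      if ((n : ℕ) % 2 = 0 ∧ b = 0) ∨ ((n : ℕ) % 2 = 1 ∧ b = 1) then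
        (-lam j) ^ ((n : ℕ) / 2) * c s j
      else 0 := by
  set m := (n : ℕ) / 2 with hm
  unfold obsMat
  rw [Matrix.of_apply]
  rcases Nat.even_or_odd (n : ℕ) with he | ho
  · have h2 : (n : ℕ) % 2 = 0 := Nat.even_iff.mp he
    have hn : (n : ℕ) = 2 * m := by omega
    rw [hn, blockA_pow_even, Matrix.mul_diagonal]
    simp only [outC, Matrix.of_apply, Nat.mul_mod_right]
    fin_cases b <;> simp [mul_comm]
  · have h2 : (n : ℕ) % 2 = 1 := Nat.odd_iff.mp ho
    have hn : (n : ℕ) = 2 * m + 1 := by omega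
    rw [hn, pow_succ, ← Matrix.mul_assoc, blockA_pow_even, Matrix.mul_apply,
      Fintype.sum_prod_type]
    simp only [Matrix.mul_diagonal, outC, blockA, Matrix.of_apply, Fin.sum_univ_two,
      Nat.mul_add_mod]
    fin_cases b <;>
      simp [Finset.sum_ite_eq', mul_comm, mul_assoc, mul_left_comm]

def rowEquiv (N r : ℕ) :
    Fin (2 * N) × Fin (r + 1) ≃ ((Fin (r + 1) × Fin N) ⊕ (Fin (r + 1) × Fin N)) where
  toFun ns :=
    if ((ns.1 : ℕ)) % 2 = 0 then
      Sum.inl (ns.2, ⟨(ns.1 : ℕ) / 2, by omega⟩)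
    else
      Sum.inr (ns.2, ⟨(ns.1 : ℕ) / 2, by omega⟩)
  invFun x :=
    match x with
    | Sum.inl (s, m) => (⟨2 * (m : ℕ), by omega⟩, s)
    | Sum.inr (s, m) => (⟨2 * (m : ℕ) + 1, by omega⟩, s)
  left_inv := by
    rintro ⟨n, s⟩
    by_cases h : ((n : ℕ)) % 2 = 0
    · simp only [if_pos h, Prod.mk.injEq, Fin.ext_iff]
      exact ⟨by omega, trivial⟩
    · simp only [if_neg h, Prod.mk.injEq, Fin.ext_iff]
      exact ⟨by omega, trivial⟩
  right_inv := by
    rintro (⟨s, m⟩ | ⟨s, m⟩) <;>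
      simp [Fin.ext_iff, Nat.mul_mod_right, Nat.mul_add_mod, Prod.ext_iff] <;> omega

def colEquiv (N : ℕ) : Fin N × Fin 2 ≃ (Fin N ⊕ Fin N) where
  toFun p := if p.2 = 0 then Sum.inl p.1 else Sum.inr p.1
  invFun x := match x with
    | Sum.inl j => (j, 0)
    | Sum.inr j => (j, 1)
  left_inv := by rintro ⟨j, b⟩; fin_cases b <;> simp
  right_inv := by rintro (j | j) <;> simp

lemma obsMat_eq (N r : ℕ) (lam : Fin N → ℝ) (c : Fin (r + 1) → Fin N → ℝ) :
    obsMat N r lam c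
      = (Matrix.fromBlocks (stackedH N r lam c) 0 0 (stackedH N r lam c)).submatrix
          (rowEquiv N r) (colEquiv N) := by
  ext ⟨n, s⟩ ⟨j, b⟩
  rw [obsMat_apply, Matrix.submatrix_apply]
  simp only [rowEquiv, colEquiv, Equiv.coe_fn_mk]
  by_cases h : ((n : ℕ)) % 2 = 0
  · fin_cases b <;> simp [h, stackedH, Matrix.fromBlocks]
  · have h1 : ((n : ℕ)) % 2 = 1 := by omega
    fin_cases b <;> simp [h, h1, stackedH, Matrix.fromBlocks]

lemma rank_submatrix_rect {m n k l : Type*} [Fintype n] [Fintype l] [Fintype m] [Fintype k]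
    (A : Matrix m n ℝ) (e₁ : k ≃ m) (e₂ : l ≃ n) :
    (A.submatrix e₁ e₂).rank = A.rank := by
  have : A.submatrix e₁ e₂ = Matrix.reindex e₁.symm e₂.symm A := rfl
  rw [this, Matrix.rank, Matrix.rank, Matrix.mulVecLin_reindex,
    LinearMap.range_comp, LinearMap.range_comp, LinearEquiv.range, Submodule.map_top,
    LinearEquiv.finrank_map_eq]

def prodSubEquiv {R M M' : Type*} [Ring R] [AddCommGroup M] [AddCommGroup M'] [Module R M]
    [Module R M'] (p : Submodule R M) (q : Submodule R M') :
    (p.prod q) ≃ₗ[R] p × q where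
  toFun x := (⟨x.1.1, x.2.1⟩, ⟨x.1.2, x.2.2⟩)
  invFun y := ⟨(y.1.1, y.2.1), ⟨y.1.2, y.2.2⟩⟩
  map_add' _ _ := rfl
  map_smul' _ _ := rfl
  left_inv _ := rfl
  right_inv _ := rfl

lemma range_prodMap' {R M M₂ M₃ M₄ : Type*} [CommRing R] [AddCommGroup M] [AddCommGroup M₂]
    [AddCommGroup M₃] [AddCommGroup M₄] [Module R M] [Module R M₂] [Module R M₃] [Module R M₄]
    (f : M →ₗ[R] M₂) (g : M₃ →ₗ[R] M₄) :
    LinearMap.range (f.prodMap g) = (LinearMap.range f).prod (LinearMap.range g) := by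
  ext ⟨a, b⟩
  simp only [LinearMap.mem_range, Submodule.mem_prod, LinearMap.prodMap_apply, Prod.mk.injEq,
    Prod.exists]
  constructor
  · rintro ⟨x, y, h1, h2⟩; exact ⟨⟨x, h1⟩, ⟨y, h2⟩⟩
  · rintro ⟨⟨x, hx⟩, ⟨y, hy⟩⟩; exact ⟨x, y, hx, hy⟩

lemma rank_fromBlocks_diag {m n m' n' : Type*} [Fintype m] [Fintype n] [Fintype m'] [Fintype n']
    (A : Matrix m n ℝ) (B : Matrix m' n' ℝ) :
    (Matrix.fromBlocks A 0 0 B).rank = A.rank + B.rank := by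
  classical
  set e₁ := LinearEquiv.sumArrowLequivProdArrow m m' ℝ ℝ
  set e₂ := LinearEquiv.sumArrowLequivProdArrow n n' ℝ ℝ
  have hmap : (Matrix.fromBlocks A 0 0 B).mulVecLin =
      (e₁.symm : ((m → ℝ) × (m' → ℝ)) →ₗ[ℝ] (m ⊕ m' → ℝ)) ∘ₗ
        (LinearMap.prodMap A.mulVecLin B.mulVecLin) ∘ₗ
        (e₂ : (n ⊕ n' → ℝ) →ₗ[ℝ] (n → ℝ) × (n' → ℝ)) := by
    refine LinearMap.ext fun x => ?_
    have hx : x = Sum.elim (fun i => x (Sum.inl i)) (fun i => x (Sum.inr i)) := by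
      funext i; cases i <;> rfl
    conv_lhs => rw [Matrix.mulVecLin_apply, hx, Matrix.fromBlocks_mulVec]
    funext i
    cases i <;>
      simp [e₁, e₂, LinearEquiv.sumArrowLequivProdArrow, Equiv.sumArrowEquivProdArrow,
        Matrix.zero_mulVec, Function.comp_def]
  rw [Matrix.rank, Matrix.rank, Matrix.rank, hmap, LinearMap.range_comp, LinearMap.range_comp,
    LinearEquiv.range, Submodule.map_top, LinearEquiv.finrank_map_eq,
    range_prodMap']
  rw [LinearEquiv.finrank_eq (prodSubEquiv (LinearMap.range A.mulVecLin)
    (LinearMap.range B.mulVecLin)), Module.finrank_prod]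

theorem stmt18 (N r : ℕ) (lam : Fin N → ℝ) (c : Fin (r + 1) → Fin N → ℝ) :
    (∃ (eρ : Fin (2 * N) × Fin (r + 1) ≃ ((Fin (r + 1) × Fin N) ⊕ (Fin (r + 1) × Fin N)))
       (eτ : Fin N × Fin 2 ≃ (Fin N ⊕ Fin N)),
      obsMat N r lam c
        = (Matrix.fromBlocks (stackedH N r lam c) 0 0 (stackedH N r lam c)).submatrix eρ eτ)
    ∧ (obsMat N r lam c).rank = 2 * (stackedH N r lam c).rank := by
  refine ⟨⟨rowEquiv N r, colEquiv N, obsMat_eq N r lam c⟩, ?_⟩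
  rw [obsMat_eq N r lam c, rank_submatrix_rect, rank_fromBlocks_diag]
  omega
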